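/- Let 𝓕 be a complete polyhedral fan in ℝ^n and let d = (d_0, d_1, ..., d_{n−1}) ∈ ℝ^n_{>0}. Then there exists d̃ = (d̃_0, d̃_1, ..., d̃_{n−1}) ∈ ℝ^n_{>0} with d̃_k ≥ d_k for all k = 0, ..., n−1, such that the quasi-toric differential inclusion given by 𝓕 and d̃ is well-defined. -/

import Mathlib

open scoped RealInnerProductSpace

/-- A (convex polyhedral) cone in `ℝ^n`: nonnegative combinations of finitely many vectors. -/
def IsPolyhedralCone {n : ℕ} (C : Set (EuclideanSpace ℝ (Fin n))) : Prop :=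
  ∃ (k : ℕ) (v : Fin k → EuclideanSpace ℝ (Fin n)),
    C = {x | ∃ lam : Fin k → ℝ, (∀ i, 0 ≤ lam i) ∧ x = ∑ i, lam i • v i}

/-- `F` is a face of the cone `C`. -/
def IsFaceOf {n : ℕ} (F C : Set (EuclideanSpace ℝ (Fin n))) : Prop :=
  F = C ∨ ∃ u : EuclideanSpace ℝ (Fin n),
    (∀ x ∈ C, ⟪u, x⟫ ≤ 0) ∧ F = C ∩ {x | ⟪u, x⟫ = 0}

/-- The dimension of a cone: the dimension of its linear span. -/
noncomputable def coneDim {n : ℕ} (C : Set (EuclideanSpace ℝ (Fin n))) : ℕ :=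
  Module.finrank ℝ (Submodule.span ℝ C)

/-- A facet of `C` is a face of dimension `dim C - 1`. -/
def IsFacetOf {n : ℕ} (σ C : Set (EuclideanSpace ℝ (Fin n))) : Prop :=
  IsFaceOf σ C ∧ coneDim σ + 1 = coneDim C

/-- The polar of a cone. -/
def polarCone {n : ℕ} (C : Set (EuclideanSpace ℝ (Fin n))) :
    Set (EuclideanSpace ℝ (Fin n)) :=
  {u | ∀ x ∈ C, ⟪u, x⟫ ≤ 0}

/-- A complete polyhedral fan in `ℝ^n`. -/
def IsCompleteFan {n : ℕ} (𝓕 : Set (Set (EuclideanSpace ℝ (Fin n)))) : Prop :=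
  𝓕.Finite ∧ (∀ C ∈ 𝓕, IsPolyhedralCone C) ∧
    (∀ C ∈ 𝓕, ∀ F, IsFaceOf F C → F ∈ 𝓕) ∧
    (∀ C ∈ 𝓕, ∀ C' ∈ 𝓕, IsFaceOf (C ∩ C') C ∧ IsFaceOf (C ∩ C') C') ∧
    ⋃₀ 𝓕 = Set.univ

/-- Right-hand side of the toric differential inclusion given by `𝓕` and `δ`. -/
noncomputable def toricRHS {n : ℕ} (𝓕 : Set (Set (EuclideanSpace ℝ (Fin n))))
    (δ : ℝ) (X : EuclideanSpace ℝ (Fin n)) : Set (EuclideanSpace ℝ (Fin n)) :=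
  polarCone (⋂₀ {C | C ∈ 𝓕 ∧ Metric.infDist X C ≤ δ})

/-- The quasi-toric differential inclusion given by `𝓕` and `d` is well-defined. -/
def QTDIWellDefined {n : ℕ} (𝓕 : Set (Set (EuclideanSpace ℝ (Fin n))))
    (d : Fin n → ℝ) : Prop :=
  ∀ C ∈ 𝓕, ∀ C' ∈ 𝓕, ∀ X : EuclideanSpace ℝ (Fin n),
    ∀ (hk : coneDim C < n) (hm : coneDim C' < n),
      Metric.infDist X C ≤ d ⟨coneDim C, hk⟩ →
      Metric.infDist X C' ≤ d ⟨coneDim C', hm⟩ →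
      ∃ hh : coneDim (C ∩ C') < n,
        Metric.infDist X (C ∩ C') ≤ d ⟨coneDim (C ∩ C'), hh⟩


section AuxQTDI
open Metric Finset

variable {n : ℕ}

local notation "E" => EuclideanSpace ℝ (Fin n)

def coneSet {k : ℕ} (v : Fin k → E) : Set E :=
  {x | ∃ lam : Fin k → ℝ, (∀ i, 0 ≤ lam i) ∧ x = ∑ i, lam i • v i}

lemma zero_mem_coneSet {k : ℕ} (v : Fin k → E) : (0 : E) ∈ coneSet v :=
  ⟨0, fun _ => le_rfl, by simp⟩

lemma gen_mem_coneSet {k : ℕ} (v : Fin k → E) (i : Fin k) : v i ∈ coneSet v := by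
  refine ⟨Pi.single i 1, fun j => by by_cases h : j = i <;> simp [h, Pi.single_apply], ?_⟩
  simp [Pi.single_apply, ite_smul]

lemma add_mem_coneSet {k : ℕ} {v : Fin k → E} {x y : E}
    (hx : x ∈ coneSet v) (hy : y ∈ coneSet v) : x + y ∈ coneSet v := by
  obtain ⟨a, ha, rfl⟩ := hx; obtain ⟨b, hb, rfl⟩ := hy
  exact ⟨a + b, fun i => add_nonneg (ha i) (hb i), by simp [add_smul, Finset.sum_add_distrib]⟩

lemma smul_mem_coneSet {k : ℕ} {v : Fin k → E} {x : E} {t : ℝ}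
    (ht : 0 ≤ t) (hx : x ∈ coneSet v) : t • x ∈ coneSet v := by
  obtain ⟨a, ha, rfl⟩ := hx
  exact ⟨t • a, fun i => mul_nonneg ht (ha i), by simp [Finset.smul_sum, smul_smul]⟩

lemma coneSet_convex {k : ℕ} (v : Fin k → E) : Convex ℝ (coneSet v) := by
  intro x hx y hy a b ha hb _
  exact add_mem_coneSet (smul_mem_coneSet ha hx) (smul_mem_coneSet hb hy)

lemma inner_nonpos_of_gens {k : ℕ} {v : Fin k → E} {w : E}
    (hw : ∀ i, ⟪w, v i⟫ ≤ 0) {x : E} (hx : x ∈ coneSet v) : ⟪w, x⟫ ≤ 0 := by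
  obtain ⟨a, ha, rfl⟩ := hx
  rw [inner_sum]
  refine Finset.sum_nonpos fun i _ => ?_
  rw [real_inner_smul_right]
  exact mul_nonpos_of_nonneg_of_nonpos (ha i) (hw i)

-- linearly independent case
lemma coneSet_closed_of_li {k : ℕ} (v : Fin k → E) (hli : LinearIndependent ℝ v) :
    IsClosed (coneSet v) := by
  classical
  let T : (Fin k → ℝ) →ₗ[ℝ] E :=
    { toFun := fun lam => ∑ i, lam i • v i
      map_add' := by intro a b; simp [add_smul, Finset.sum_add_distrib]
      map_smul' := by intro t a; simp [Finset.smul_sum, smul_smul] }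
  have hinj : Function.Injective T := by
    rw [← LinearMap.ker_eq_bot, LinearMap.ker_eq_bot']
    intro g hg
    have := Fintype.linearIndependent_iff.mp hli g hg
    funext i; exact this i
  have hemb := LinearMap.isClosedEmbedding_of_injective (LinearMap.ker_eq_bot.mpr hinj : LinearMap.ker T = ⊥)
  have : coneSet v = T '' {lam | ∀ i, 0 ≤ lam i} := by
    ext x
    exact ⟨fun ⟨lam, h1, h2⟩ => ⟨lam, h1, h2.symm⟩, fun ⟨lam, h1, h2⟩ => ⟨lam, h1, h2.symm⟩⟩
  rw [this]
  refine hemb.isClosedMap _ ?_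
  have : {lam : Fin k → ℝ | ∀ i, 0 ≤ lam i} = ⋂ i, {lam | 0 ≤ lam i} := by
    ext; simp
  rw [this]
  exact isClosed_iInter fun i => isClosed_le continuous_const (continuous_apply i)

lemma coneSet_closed : ∀ (k : ℕ) (v : Fin k → E), IsClosed (coneSet v) := by
  classical
  intro k
  induction k with
  | zero =>
    intro v
    have : coneSet v = {0} := by
      ext x; constructor
      · rintro ⟨lam, -, rfl⟩; simp
      · rintro rfl; exact ⟨0, fun i => le_rfl, by simp⟩
    rw [this]; exact isClosed_singleton
  | succ k ih =>
    intro v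
    by_cases hli : LinearIndependent ℝ v
    · exact coneSet_closed_of_li v hli
    · obtain ⟨g, hg0, i₁, hgi₁⟩ := Fintype.not_linearIndependent_iff.mp hli
      -- get c with ∑ c i • v i = 0 and some c i > 0
      obtain ⟨c, hc0, hcpos⟩ : ∃ c : Fin (k+1) → ℝ,
          (∑ i, c i • v i = 0) ∧ ∃ i, 0 < c i := by
        rcases lt_trichotomy (g i₁) 0 with h | h | h
        · refine ⟨-g, ?_, ⟨i₁, by simpa using h⟩⟩
          simp only [Pi.neg_apply, neg_smul]
          rw [Finset.sum_neg_distrib, hg0, neg_zero]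
        · exact absurd h hgi₁
        · exact ⟨g, hg0, i₁, h⟩
      have key : coneSet v = ⋃ i : Fin (k+1), coneSet (v ∘ i.succAbove) := by
        ext x
        constructor
        · rintro ⟨lam, hlam, rfl⟩
          -- pick minimizer of lam i / c i over {i | 0 < c i}
          have hne : (Finset.univ.filter fun i => 0 < c i).Nonempty := by
            obtain ⟨i, hi⟩ := hcpos
            exact ⟨i, by simp [hi]⟩
          obtain ⟨i₀, hi₀mem, hi₀min⟩ := Finset.exists_min_image _
            (fun i => lam i / c i) hne
          have hci₀ : 0 < c i₀ := by simpa using (Finset.mem_filter.mp hi₀mem).2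
          set t : ℝ := lam i₀ / c i₀ with ht
          have htnn : 0 ≤ t := div_nonneg (hlam i₀) hci₀.le
          set lam' : Fin (k+1) → ℝ := fun i => lam i - t * c i with hlam'
          have hlam'nn : ∀ i, 0 ≤ lam' i := by
            intro i
            by_cases h : 0 < c i
            · have : t ≤ lam i / c i := hi₀min i (by simp [h])
              have := (le_div_iff₀ h).mp this
              simp only [hlam']; linarith
            · push_neg at h
              have : t * c i ≤ 0 := mul_nonpos_of_nonneg_of_nonpos htnn h
              simp only [hlam']; linarith [hlam i]
          have hlam'i₀ : lam' i₀ = 0 := by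
            simp only [hlam', ht]
            field_simp
            ring
          have hxsum : ∑ i, lam' i • v i = ∑ i, lam i • v i := by
            simp only [hlam', sub_smul, Finset.sum_sub_distrib, mul_smul]
            rw [← Finset.smul_sum, hc0, smul_zero, sub_zero]
          refine Set.mem_iUnion.mpr ⟨i₀, ⟨fun j => lam' (i₀.succAbove j),
            fun j => hlam'nn _, ?_⟩⟩
          have := Fin.sum_univ_succAbove (fun i => lam' i • v i) i₀
          rw [← hxsum, this, hlam'i₀, zero_smul, zero_add]
          rfl
        · rintro hx
          obtain ⟨i, lam, hlam, rfl⟩ := Set.mem_iUnion.mp hx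
          refine ⟨Function.extend i.succAbove lam 0, ?_, ?_⟩
          · intro j
            rcases em (∃ j', i.succAbove j' = j) with ⟨j', rfl⟩ | h
            · rw [Function.Injective.extend_apply (Fin.succAbove_right_injective)]
              exact hlam j'
            · rw [Function.extend_apply' _ _ _ h]; exact le_rfl
          · rw [Fin.sum_univ_succAbove (fun j => Function.extend i.succAbove lam 0 j • v j) i]
            rw [Function.extend_apply' _ _ _ (by simpa using fun j' => (Fin.succAbove_ne i j'))]
            simp only [Pi.zero_apply, zero_smul, zero_add]
            congr 1
            funext j'
            rw [Function.Injective.extend_apply (Fin.succAbove_right_injective)]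
            rfl
      rw [key]
      exact isClosed_iUnion_of_finite fun i => ih (v ∘ i.succAbove)

theorem farkas {k : ℕ} (v : Fin k → E) (b : E) (hb : b ∉ coneSet v) :
    ∃ w : E, (∀ i, ⟪w, v i⟫ ≤ 0) ∧ 0 < ⟪w, b⟫ := by
  obtain ⟨f, u, hfs, hub⟩ := geometric_hahn_banach_closed_point
    (coneSet_convex v) (coneSet_closed k v) hb
  have hu0 : 0 < u := by simpa using hfs 0 (zero_mem_coneSet v)
  have hf0 : ∀ x ∈ coneSet v, f x ≤ 0 := by
    intro x hx
    by_contra h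
    push_neg at h
    have ht : (0:ℝ) < u / f x := div_pos hu0 h
    have := hfs ((u / f x) • x) (smul_mem_coneSet ht.le hx)
    rw [map_smul, smul_eq_mul, div_mul_cancel₀ _ (ne_of_gt h)] at this
    exact lt_irrefl u this
  refine ⟨(InnerProductSpace.toDual ℝ _).symm f, ?_, ?_⟩
  · intro i
    rw [InnerProductSpace.toDual_symm_apply]
    exact hf0 _ (gen_mem_coneSet v i)
  · rw [InnerProductSpace.toDual_symm_apply]
    exact hu0.trans hub

/-- Separation lemma: good functional for a pair of cones whose intersection is a face
of the first. -/
theorem sep_lemma {k m : ℕ} (v : Fin k → E) (y : Fin m → E)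
    (hface : IsFaceOf (coneSet v ∩ coneSet y) (coneSet v)) :
    ∃ w : E, (∀ i, ⟪w, v i⟫ ≤ 0) ∧ (∀ j, 0 ≤ ⟪w, y j⟫) ∧
      ∀ i, ⟪w, v i⟫ = 0 → v i ∈ coneSet y := by
  classical
  -- individual functionals
  have key : ∀ i : Fin k, ∃ wi : E, (∀ i', ⟪wi, v i'⟫ ≤ 0) ∧ (∀ j, 0 ≤ ⟪wi, y j⟫) ∧
      (v i ∉ coneSet y → ⟪wi, v i⟫ < 0) := by
    intro i
    by_cases hvi : v i ∈ coneSet y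
    · exact ⟨0, fun i' => by simp, fun j => by simp, fun h => absurd hvi h⟩
    · -- Farkas applied to -(v i) and generators v, -y
      set b : Fin (k + m) → E := Fin.append v (fun j => -(y j)) with hb
      have hmem : -(v i) ∉ coneSet b := by
        rintro ⟨lam, hlam, hsum⟩
        -- split the sum
        rw [Fin.sum_univ_add] at hsum
        simp only [hb, Fin.append_left, Fin.append_right] at hsum
        -- z := v i + ∑ ν v = ∑ μ y
        set z : E := ∑ j, lam (Fin.natAdd k j) • y j with hz
        have hzy : z ∈ coneSet y := ⟨fun j => lam (Fin.natAdd k j), fun j => hlam _, rfl⟩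
        have hzv : z = v i + ∑ i', lam (Fin.castAdd m i') • v i' := by
          have h2 : (∑ x : Fin m, lam (Fin.natAdd k x) • -y x) = -z := by
            simp only [smul_neg]
            rw [Finset.sum_neg_distrib]
          rw [h2] at hsum
          have h4 : -(v i) - (∑ x : Fin k, lam (Fin.castAdd m x) • v x + -z) = 0 :=
            sub_eq_zero.mpr hsum
          refine sub_eq_zero.mp ?_
          calc z - (v i + ∑ i' : Fin k, lam (Fin.castAdd m i') • v i')
              = -(v i) - (∑ x : Fin k, lam (Fin.castAdd m x) • v x + -z) := by abel
            _ = 0 := h4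
        have hzvmem : z ∈ coneSet v := by
          rw [hzv]
          exact add_mem_coneSet (gen_mem_coneSet v i)
            ⟨fun i' => lam (Fin.castAdd m i'), fun i' => hlam _, rfl⟩
        -- use the face property
        rcases hface with hFC | ⟨u, hu, hFu⟩
        · -- C ∩ C' = C, so v i ∈ C'
          exact hvi (hFC.symm ▸ gen_mem_coneSet v i : v i ∈ coneSet v ∩ coneSet y).2
        · have hzF : z ∈ coneSet v ∩ {x | ⟪u, x⟫ = 0} := hFu ▸ ⟨hzvmem, hzy⟩
          have huz : ⟪u, z⟫ = 0 := hzF.2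
          have hexp : ⟪u, z⟫ = ⟪u, v i⟫ + ∑ i', lam (Fin.castAdd m i') * ⟪u, v i'⟫ := by
            rw [hzv, inner_add_right, inner_sum]
            congr 1
            exact Finset.sum_congr rfl fun i' _ => real_inner_smul_right _ _ _
          have h1 : ⟪u, v i⟫ ≤ 0 := hu _ (gen_mem_coneSet v i)
          have h2 : ∑ i', lam (Fin.castAdd m i') * ⟪u, v i'⟫ ≤ 0 :=
            Finset.sum_nonpos fun i' _ =>
              mul_nonpos_of_nonneg_of_nonpos (hlam _) (hu _ (gen_mem_coneSet v i'))
          have huvi : ⟪u, v i⟫ = 0 := by rw [hexp] at huz; linarith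
          have : v i ∈ coneSet v ∩ coneSet y := by
            rw [hFu]; exact ⟨gen_mem_coneSet v i, huvi⟩
          exact hvi this.2
      obtain ⟨w, hw1, hw2⟩ := farkas b (-(v i)) hmem
      refine ⟨w, fun i' => ?_, fun j => ?_, fun _ => ?_⟩
      · have := hw1 (Fin.castAdd m i'); rwa [hb, Fin.append_left] at this
      · have := hw1 (Fin.natAdd k j); rw [hb, Fin.append_right] at this
        rw [inner_neg_right] at this; linarith
      · rw [inner_neg_right] at hw2; linarith
  choose W hW1 hW2 hW3 using key
  refine ⟨∑ i, W i, ?_, ?_, ?_⟩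
  · intro i'
    rw [sum_inner]
    exact Finset.sum_nonpos fun i _ => hW1 i i'
  · intro j
    rw [sum_inner]
    exact Finset.sum_nonneg fun i _ => hW2 i j
  · intro i hwi
    by_contra hvi
    rw [sum_inner] at hwi
    have := (Finset.sum_eq_zero_iff_of_nonpos (fun i' _ => hW1 i' i)).mp hwi i
      (Finset.mem_univ i)
    exact absurd this (ne_of_lt (hW3 i hvi))

/-- Within the cone, distance to the face cut out by `w` is controlled by `-⟪w, x⟫`. -/
theorem dist_face_bound {k : ℕ} (v : Fin k → E) (w : E) (hw : ∀ i, ⟪w, v i⟫ ≤ 0) :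
    ∃ c : ℝ, 0 ≤ c ∧ ∀ x ∈ coneSet v,
      Metric.infDist x (coneSet v ∩ {z | ⟪w, z⟫ = 0}) ≤ c * (-⟪w, x⟫) := by
  classical
  set c : ℝ := ∑ i, if ⟪w, v i⟫ < 0 then ‖v i‖ / (-⟪w, v i⟫) else 0 with hc
  have hcnn : 0 ≤ c := Finset.sum_nonneg fun i _ => by
    split
    · rename_i h
      exact div_nonneg (norm_nonneg _) (by linarith)
    · exact le_rfl
  refine ⟨c, hcnn, ?_⟩
  rintro x ⟨lam, hlam, rfl⟩
  set x' : E := ∑ i, (if ⟪w, v i⟫ = 0 then lam i else 0) • v i with hx'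
  have hx'mem : x' ∈ coneSet v ∩ {z | ⟪w, z⟫ = 0} := by
    constructor
    · exact ⟨_, fun i => by split <;> simp [hlam i], rfl⟩
    · show ⟪w, x'⟫ = 0
      rw [hx', inner_sum]
      refine Finset.sum_eq_zero fun i _ => ?_
      rw [real_inner_smul_right]
      split
      · rename_i h; rw [h, mul_zero]
      · rw [zero_mul]
  refine le_trans (Metric.infDist_le_dist_of_mem hx'mem) ?_
  rw [dist_eq_norm]
  have hdiff : (∑ i, lam i • v i) - x' = ∑ i, (if ⟪w, v i⟫ = 0 then 0 else lam i) • v i := by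
    rw [hx', ← Finset.sum_sub_distrib]
    refine Finset.sum_congr rfl fun i _ => ?_
    split <;> simp
  rw [hdiff]
  -- bound the norm of the sum
  have hinner : -⟪w, ∑ i, lam i • v i⟫ = ∑ i, lam i * (-⟪w, v i⟫) := by
    rw [inner_sum, ← Finset.sum_neg_distrib]
    exact Finset.sum_congr rfl fun i _ => by rw [real_inner_smul_right]; ring
  rw [hinner, Finset.mul_sum]
  refine le_trans (norm_sum_le _ _) (Finset.sum_le_sum fun i _ => ?_)
  rw [norm_smul]
  by_cases h : ⟪w, v i⟫ = 0
  · simp [h]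
  · have hneg : ⟪w, v i⟫ < 0 := lt_of_le_of_ne (hw i) h
    have hpos : 0 < -⟪w, v i⟫ := by linarith
    rw [if_neg h]
    have hci : ‖v i‖ / (-⟪w, v i⟫) ≤ c := by
      rw [hc]
      refine Finset.single_le_sum (f := fun i => if ⟪w, v i⟫ < 0 then ‖v i‖ / (-⟪w, v i⟫) else 0)
        (fun j _ => ?_) (Finset.mem_univ i) |>.trans_eq' ?_
      · skip
        split
        · rename_i hj
          exact div_nonneg (norm_nonneg _) (by linarith)
        · exact le_rfl
      · rw [if_pos hneg]
    have : ‖v i‖ ≤ c * (-⟪w, v i⟫) := by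
      rw [div_le_iff₀ hpos] at hci
      linarith
    calc ‖lam i‖ * ‖v i‖ = lam i * ‖v i‖ := by rw [Real.norm_of_nonneg (hlam i)]
      _ ≤ lam i * (c * (-⟪w, v i⟫)) := mul_le_mul_of_nonneg_left this (hlam i)
      _ = c * (lam i * (-⟪w, v i⟫)) := by ring

theorem pair_bound {k m : ℕ} (v : Fin k → E) (y : Fin m → E)
    (hface : IsFaceOf (coneSet v ∩ coneSet y) (coneSet v)) :
    ∃ L : ℝ, 1 ≤ L ∧ ∀ X : E, Metric.infDist X (coneSet v ∩ coneSet y) ≤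
      L * (Metric.infDist X (coneSet v) + Metric.infDist X (coneSet y)) := by
  classical
  obtain ⟨w, hw1, hw2, hw3⟩ := sep_lemma v y hface
  obtain ⟨c, hc, hbound⟩ := dist_face_bound v w hw1
  -- identify the intersection with the w-face
  have hFeq : coneSet v ∩ coneSet y = coneSet v ∩ {z | ⟪w, z⟫ = 0} := by
    ext x
    constructor
    · rintro ⟨hxv, hxy⟩
      refine ⟨hxv, le_antisymm (inner_nonpos_of_gens hw1 hxv) ?_⟩
      have : ⟪-w, x⟫ ≤ 0 := inner_nonpos_of_gens (fun j => by
        rw [inner_neg_left]; linarith [hw2 j]) hxy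
      rw [inner_neg_left] at this; linarith
    · rintro ⟨hxv, hxw⟩
      refine ⟨hxv, ?_⟩
      obtain ⟨lam, hlam, rfl⟩ := hxv
      have hxw' : ⟪w, ∑ i, lam i • v i⟫ = 0 := hxw
      rw [inner_sum] at hxw'
      have hterm : ∀ i ∈ Finset.univ, lam i * ⟪w, v i⟫ = 0 := by
        refine (Finset.sum_eq_zero_iff_of_nonpos fun i _ => ?_).mp ?_
        · exact mul_nonpos_of_nonneg_of_nonpos (hlam i) (hw1 i)
        · rw [← hxw']
          exact Finset.sum_congr rfl fun i _ => (real_inner_smul_right _ _ _).symm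
      -- each term of the sum lies in coneSet y
      refine Finset.sum_induction _ (· ∈ coneSet y)
        (fun _ _ => add_mem_coneSet) (zero_mem_coneSet y) fun i _ => ?_
      by_cases hli : lam i = 0
      · rw [hli, zero_smul]; exact zero_mem_coneSet y
      · have : ⟪w, v i⟫ = 0 := by
          have := hterm i (Finset.mem_univ i)
          rcases mul_eq_zero.mp this with h | h
          · exact absurd h hli
          · exact h
        exact smul_mem_coneSet (hlam i) (hw3 i this)
  set L : ℝ := 1 + c * ‖w‖ with hL
  have hLnn : 1 ≤ L := by have : 0 ≤ c * ‖w‖ := mul_nonneg hc (norm_nonneg _); linarith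
  refine ⟨L, hLnn, fun X => ?_⟩
  set a := Metric.infDist X (coneSet v) with ha
  set b := Metric.infDist X (coneSet y) with hb'
  have hann : 0 ≤ a := Metric.infDist_nonneg
  have hbnn : 0 ≤ b := Metric.infDist_nonneg
  refine le_of_forall_pos_le_add fun δ hδ => ?_
  set ε : ℝ := δ / (1 + 2 * (c * ‖w‖)) with hε
  have hεpos : 0 < ε := by
    apply div_pos hδ
    have : 0 ≤ c * ‖w‖ := mul_nonneg hc (norm_nonneg _)
    linarith
  obtain ⟨x, hxv, hxd⟩ := (Metric.infDist_lt_iff ⟨0, zero_mem_coneSet v⟩).mp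
    (show Metric.infDist X (coneSet v) < a + ε by rw [← ha]; linarith)
  obtain ⟨z, hzy, hzd⟩ := (Metric.infDist_lt_iff ⟨0, zero_mem_coneSet y⟩).mp
    (show Metric.infDist X (coneSet y) < b + ε by rw [← hb']; linarith)
  have step1 : Metric.infDist X (coneSet v ∩ coneSet y) ≤
      Metric.infDist x (coneSet v ∩ coneSet y) + dist X x :=
    Metric.infDist_le_infDist_add_dist
  have step2 : Metric.infDist x (coneSet v ∩ coneSet y) ≤ c * (-⟪w, x⟫) := by
    rw [hFeq]; exact hbound x hxv
  have step3 : -⟪w, x⟫ ≤ ‖w‖ * (dist z X + dist X x) := by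
    have h1 : 0 ≤ ⟪w, z⟫ := by
      have : ⟪-w, z⟫ ≤ 0 := inner_nonpos_of_gens (fun j => by
        rw [inner_neg_left]; linarith [hw2 j]) hzy
      rw [inner_neg_left] at this; linarith
    have h2 : -⟪w, x⟫ ≤ ⟪w, z - x⟫ := by
      rw [inner_sub_right]; linarith
    have h3 : ⟪w, z - x⟫ ≤ ‖w‖ * ‖z - x‖ := real_inner_le_norm w (z - x)
    have h4 : ‖z - x‖ ≤ dist z X + dist X x := by
      rw [← dist_eq_norm]
      exact dist_triangle z X x
    calc -⟪w, x⟫ ≤ ‖w‖ * ‖z - x‖ := h2.trans h3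
      _ ≤ ‖w‖ * (dist z X + dist X x) := mul_le_mul_of_nonneg_left h4 (norm_nonneg _)
  have hdXx : dist X x ≤ a + ε := hxd.le
  have hdzX : dist z X ≤ b + ε := by rw [dist_comm]; exact hzd.le
  have hcw : 0 ≤ c * ‖w‖ := mul_nonneg hc (norm_nonneg _)
  have chain : Metric.infDist X (coneSet v ∩ coneSet y) ≤
      (a + ε) + c * ‖w‖ * (a + b + 2 * ε) := by
    have : c * (-⟪w, x⟫) ≤ c * ‖w‖ * (a + b + 2 * ε) := by
      calc c * (-⟪w, x⟫) ≤ c * (‖w‖ * (dist z X + dist X x)) :=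
            mul_le_mul_of_nonneg_left step3 hc
        _ ≤ c * (‖w‖ * ((b + ε) + (a + ε))) := by
            refine mul_le_mul_of_nonneg_left ?_ hc
            exact mul_le_mul_of_nonneg_left (by linarith) (norm_nonneg _)
        _ = c * ‖w‖ * (a + b + 2 * ε) := by ring
    linarith [step1, step2]
  have hεbound : ε * (1 + 2 * (c * ‖w‖)) = δ := by
    rw [hε]; field_simp
  calc Metric.infDist X (coneSet v ∩ coneSet y)
      ≤ (a + ε) + c * ‖w‖ * (a + b + 2 * ε) := chain
    _ = (a + c * ‖w‖ * (a + b)) + ε * (1 + 2 * (c * ‖w‖)) := by ring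
    _ ≤ L * (a + b) + δ := by
        rw [hεbound, hL]
        have : a + c * ‖w‖ * (a + b) ≤ (1 + c * ‖w‖) * (a + b) := by nlinarith
        linarith

lemma coneDim_mono {C D : Set E} (h : C ⊆ D) : coneDim C ≤ coneDim D :=
  Submodule.finrank_mono (Submodule.span_mono h)

lemma coneDim_lt_of_face {C : Set E} (u : E) (hu : ∀ x ∈ C, ⟪u, x⟫ ≤ 0)
    (hne : C ∩ {x | ⟪u, x⟫ = 0} ≠ C) :
    coneDim (C ∩ {x | ⟪u, x⟫ = 0}) < coneDim C := by
  -- there is x ∈ C with ⟪u, x⟫ ≠ 0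
  obtain ⟨x, hxC, hxu⟩ : ∃ x ∈ C, ⟪u, x⟫ ≠ 0 := by
    by_contra h
    push_neg at h
    exact hne (Set.ext fun z => ⟨fun hz => hz.1, fun hz => ⟨hz, h z hz⟩⟩)
  apply Submodule.finrank_lt_finrank_of_lt
  have hle : Submodule.span ℝ (C ∩ {x | ⟪u, x⟫ = 0}) ≤ Submodule.span ℝ C :=
    Submodule.span_mono Set.inter_subset_left
  refine lt_of_le_of_ne hle fun heq => ?_
  have hker : Submodule.span ℝ (C ∩ {x | ⟪u, x⟫ = 0}) ≤
      LinearMap.ker ((innerSL ℝ u : E →L[ℝ] ℝ) : E →ₗ[ℝ] ℝ) := by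
    rw [Submodule.span_le]
    rintro z ⟨-, hz⟩
    simpa using hz
  have hxspan : x ∈ Submodule.span ℝ C := Submodule.subset_span hxC
  rw [← heq] at hxspan
  exact hxu (by simpa using hker hxspan)

lemma uniform_bound {𝓕 : Set (Set (EuclideanSpace ℝ (Fin n)))} (h𝓕 : IsCompleteFan 𝓕) :
    ∃ L : ℝ, 1 ≤ L ∧ ∀ C ∈ 𝓕, ∀ C' ∈ 𝓕, ∀ X : E,
      Metric.infDist X (C ∩ C') ≤ L * (Metric.infDist X C + Metric.infDist X C') := by
  classical
  obtain ⟨hfin, hpoly, -, hpair, -⟩ := h𝓕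
  have key : ∀ p : Set E × Set E, ∃ L : ℝ, 1 ≤ L ∧ (p.1 ∈ 𝓕 → p.2 ∈ 𝓕 → ∀ X : E,
      Metric.infDist X (p.1 ∩ p.2) ≤ L * (Metric.infDist X p.1 + Metric.infDist X p.2)) := by
    rintro ⟨C, C'⟩
    by_cases h : C ∈ 𝓕 ∧ C' ∈ 𝓕
    · obtain ⟨hC, hC'⟩ := h
      obtain ⟨k, v, rfl⟩ := hpoly C hC
      obtain ⟨m, y, rfl⟩ := hpoly C' hC'
      obtain ⟨L, hL1, hL2⟩ := pair_bound v y ((hpair _ hC _ hC').1)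
      exact ⟨L, hL1, fun _ _ => hL2⟩
    · exact ⟨1, le_rfl, fun h1 h2 => absurd ⟨h1, h2⟩ h⟩
  choose Lf hLf1 hLf2 using key
  have hSfin : (𝓕 ×ˢ 𝓕).Finite := hfin.prod hfin
  obtain ⟨B, hB⟩ := (hSfin.image Lf).bddAbove
  refine ⟨max B 1, le_max_right _ _, fun C hC C' hC' X => ?_⟩
  have h1 : Lf (C, C') ≤ max B 1 := by
    refine le_trans (hB ?_) (le_max_left _ _)
    exact Set.mem_image_of_mem _ (Set.mk_mem_prod hC hC')
  refine le_trans (hLf2 (C, C') hC hC' X) ?_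
  have : 0 ≤ Metric.infDist X C + Metric.infDist X C' := by
    have := Metric.infDist_nonneg (s := C) (x := X)
    have := Metric.infDist_nonneg (s := C') (x := X)
    linarith
  exact mul_le_mul_of_nonneg_right h1 this


/-- Every positive vector `d` can be enlarged to a positive vector `d̃`
for which the quasi-toric differential inclusion given by `𝓕` and `d̃` is well-defined. -/
theorem exists_wellDefined_qtdi_ge {n : ℕ}
    (𝓕 : Set (Set (EuclideanSpace ℝ (Fin n)))) (h𝓕 : IsCompleteFan 𝓕)
    (d : Fin n → ℝ) (hd : ∀ k, 0 < d k) :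
    ∃ dt : Fin n → ℝ, (∀ k, 0 < dt k) ∧ (∀ k, d k ≤ dt k) ∧
      QTDIWellDefined 𝓕 dt := by
  classical
  obtain ⟨L, hL1, hLbnd⟩ := uniform_bound h𝓕
  set D : ℝ := 1 + ∑ j, d j with hD
  have hsum_nn : ∀ (k : Fin n), d k ≤ ∑ j, d j := fun k =>
    Finset.single_le_sum (fun j _ => (hd j).le) (Finset.mem_univ k)
  have hD1 : 1 ≤ D := by
    have : 0 ≤ ∑ j, d j := Finset.sum_nonneg fun j _ => (hd j).le
    linarith
  have h3L : 1 ≤ 3 * L := by linarith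
  set dt : Fin n → ℝ := fun k => D * (3 * L) ^ (n - 1 - (k : ℕ)) with hdt
  have hdtpos : ∀ k, 0 < dt k := fun k =>
    mul_pos (by linarith) (pow_pos (by linarith) _)
  have hpow1 : ∀ e : ℕ, 1 ≤ (3 * L) ^ e := fun e => one_le_pow₀ h3L
  refine ⟨dt, hdtpos, fun k => ?_, ?_⟩
  · calc d k ≤ D := by have := hsum_nn k; linarith
      _ = D * 1 := (mul_one D).symm
      _ ≤ dt k := by
          rw [hdt]
          exact mul_le_mul_of_nonneg_left (hpow1 _) (by linarith)
  intro C hC C' hC' X hk hm h1 h2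
  have hpair := (h𝓕.2.2.2.1 C hC C' hC')
  have hsub : C ∩ C' ⊆ C := Set.inter_subset_left
  have hsub' : C ∩ C' ⊆ C' := Set.inter_subset_right
  have hh : coneDim (C ∩ C') < n := lt_of_le_of_lt (coneDim_mono hsub) hk
  refine ⟨hh, ?_⟩
  by_cases hFC : C ∩ C' = C
  · have hfin : (⟨coneDim (C ∩ C'), hh⟩ : Fin n) = ⟨coneDim C, hk⟩ :=
      Fin.ext (by simp only [hFC])
    rw [hfin, hFC]
    exact h1
  by_cases hFC' : C ∩ C' = C'
  · have hfin : (⟨coneDim (C ∩ C'), hh⟩ : Fin n) = ⟨coneDim C', hm⟩ :=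
      Fin.ext (by simp only [hFC'])
    rw [hfin, hFC']
    exact h2
  -- strict dimension drops
  have hdim1 : coneDim (C ∩ C') < coneDim C := by
    rcases hpair.1 with h | ⟨u, hu, hFu⟩
    · exact absurd h hFC
    · rw [hFu]; exact coneDim_lt_of_face u hu (by rw [← hFu]; exact hFC)
  have hdim2 : coneDim (C ∩ C') < coneDim C' := by
    rcases hpair.2 with h | ⟨u, hu, hFu⟩
    · exact absurd h hFC'
    · rw [hFu]; exact coneDim_lt_of_face u hu (by rw [← hFu]; exact hFC')
  set h := coneDim (C ∩ C') with hdefh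
  set kk := coneDim C with hkk
  set mm := coneDim C' with hmm
  -- key arithmetic
  have hmain : L * (dt ⟨kk, hk⟩ + dt ⟨mm, hm⟩) ≤ dt ⟨h, hh⟩ := by
    simp only [hdt]
    have e1 : (3 * L) ^ (n - 1 - kk) ≤ (3 * L) ^ (n - 1 - (h + 1)) :=
      pow_le_pow_right₀ h3L (by omega)
    have e2 : (3 * L) ^ (n - 1 - mm) ≤ (3 * L) ^ (n - 1 - (h + 1)) :=
      pow_le_pow_right₀ h3L (by omega)
    have e3 : (3 * L) ^ (n - 1 - h) = (3 * L) * (3 * L) ^ (n - 1 - (h + 1)) := by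
      rw [← pow_succ']
      congr 1
      omega
    have hP : 0 < (3 * L) ^ (n - 1 - (h + 1)) := pow_pos (by linarith) _
    have hDpos : 0 < D := by linarith
    calc L * (D * (3 * L) ^ (n - 1 - kk) + D * (3 * L) ^ (n - 1 - mm))
        ≤ L * (D * (3 * L) ^ (n - 1 - (h+1)) + D * (3 * L) ^ (n - 1 - (h+1))) := by
          refine mul_le_mul_of_nonneg_left ?_ (by linarith)
          have := mul_le_mul_of_nonneg_left e1 hDpos.le
          have := mul_le_mul_of_nonneg_left e2 hDpos.le
          linarith
      _ = 2 * L * (D * (3 * L) ^ (n - 1 - (h+1))) := by ring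
      _ ≤ 3 * L * (D * (3 * L) ^ (n - 1 - (h+1))) := by
          have hQ : 0 < D * (3 * L) ^ (n - 1 - (h + 1)) := mul_pos hDpos hP
          nlinarith [mul_nonneg (by linarith : (0:ℝ) ≤ L) hQ.le]
      _ = D * (3 * L) ^ (n - 1 - h) := by rw [e3]; ring
  refine le_trans (hLbnd C hC C' hC' X) (le_trans ?_ hmain)
  refine mul_le_mul_of_nonneg_left ?_ (by linarith)
  exact add_le_add h1 h2


end AuxQTDI
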